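/- If k_n > 1, then for all positive integers m, B_k(m) = B_k(m-1) + B_{k'}(m), where k' = (k_1, ..., k_{n-1}, k_n - 1). -/

import Mathlib

open Finset

/-- The multiset {1^{k 0}, 2^{k 1}, ..., n^{k (n-1)}}. -/
def multisetOf (k : ℕ → ℕ) (n : ℕ) : Multiset ℕ :=
  ∑ i ∈ Finset.range n, Multiset.replicate (k i) (i + 1)

/-- A word is a Stirling permutation: between two equal letters, all letters are ≥. -/
def IsStirlingPerm (w : List ℕ) : Prop :=
  ∀ i s j : ℕ, i < s → s < j → j < w.length →
    w.getD i 0 = w.getD j 0 → w.getD i 0 ≤ w.getD s 0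

/-- Number of descents of a word: indices i (0-based, i < K-1) with w i > w (i+1),
together with the last index. -/
def descents (w : List ℕ) : ℕ :=
  ((Finset.range (w.length - 1)).filter fun i => w.getD (i + 1) 0 < w.getD i 0).card + 1

/-- Eulerian numbers A_{k,i}: number of Stirling permutations of {1^{k_1},...,n^{k_n}}
with exactly i descents. -/
noncomputable def eulerianA (k : ℕ → ℕ) (n i : ℕ) : ℕ :=
  Nat.card {w : List ℕ //
    (↑w : Multiset ℕ) = multisetOf k n ∧ IsStirlingPerm w ∧ descents w = i}

/-- K = k_1 + ... + k_n. -/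
def bigK (k : ℕ → ℕ) (n : ℕ) : ℕ := ∑ i ∈ Finset.range n, k i

/-- B_k(m): the coefficient of x^m in (∑_{i=1}^n A_{k,i} x^i)/(1-x)^{K+1}. -/
noncomputable def Bpoly (k : ℕ → ℕ) (n m : ℕ) : ℕ :=
  ∑ i ∈ Finset.Icc 1 n, eulerianA k n i * Nat.choose (bigK k n + m - i) (bigK k n)

/-- b_k(m): the coefficient of x^m in (∑_{i=K-n+1}^{K} A_{k,K+1-i} x^i)/(1-x)^{K+1}. -/
noncomputable def bpoly (k : ℕ → ℕ) (n m : ℕ) : ℕ :=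
  ∑ i ∈ Finset.Icc (bigK k n - n + 1) (bigK k n),
    eulerianA k n (bigK k n + 1 - i) * Nat.choose (bigK k n + m - i) (bigK k n)


/-! ### Descent counting -/

def cntD : List ℕ → ℕ
  | [] => 0
  | [_] => 0
  | a :: b :: l => (if b < a then 1 else 0) + cntD (b :: l)

lemma cntD_cons (x : ℕ) (l : List ℕ) (h : l ≠ []) :
    cntD (x :: l) = (if l.headI < x then 1 else 0) + cntD l := by
  cases l with
  | nil => simp at h
  | cons b t => rfl

lemma card_filter_eq_cntD (w : List ℕ) :
    ((Finset.range (w.length - 1)).filter fun i => w.getD (i + 1) 0 < w.getD i 0).card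
      = cntD w := by
  induction w with
  | nil => simp [cntD]
  | cons a t ih =>
    cases t with
    | nil => simp [cntD]
    | cons b l =>
      have hlen : (a :: b :: l).length - 1 = l.length + 1 := by simp
      rw [hlen, Finset.card_filter, Finset.sum_range_succ']
      have h0 : ((if (a :: b :: l).getD (0 + 1) 0 < (a :: b :: l).getD 0 0 then 1 else 0) : ℕ)
          = if b < a then 1 else 0 := by simp
      have h1 : ∀ i, ((if (a :: b :: l).getD (i + 1 + 1) 0 < (a :: b :: l).getD (i + 1) 0
            then 1 else 0) : ℕ)
          = if (b :: l).getD (i + 1) 0 < (b :: l).getD i 0 then 1 else 0 := by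
        intro i; simp [List.getD_cons_succ]
      rw [h0, Finset.sum_congr rfl fun i _ => h1 i, ← Finset.card_filter]
      have : (b :: l).length - 1 = l.length := by simp
      rw [← this, ih]
      show cntD (b :: l) + _ = cntD (a :: b :: l)
      rw [cntD_cons a (b :: l) (by simp)]
      simp [Nat.add_comm]
      exact if_congr Iff.rfl rfl rfl

lemma descents_eq (w : List ℕ) : descents w = cntD w + 1 := by
  rw [descents, card_filter_eq_cntD]

lemma headI_append_cons (a : List ℕ) (x : ℕ) (l : List ℕ) :
    (a ++ x :: l).headI = (a ++ [x]).headI := by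
  cases a <;> simp

lemma cntD_split (a : List ℕ) (x : ℕ) (l : List ℕ) :
    cntD (a ++ x :: l) = cntD (a ++ [x]) + cntD (x :: l) := by
  induction a with
  | nil => simp [cntD]
  | cons y a' ih =>
    rw [List.cons_append, List.cons_append,
      cntD_cons y (a' ++ x :: l) (by simp), cntD_cons y (a' ++ [x]) (by simp),
      headI_append_cons, ih]
    omega

lemma cntD_rep (s n : ℕ) (b : List ℕ) :
    cntD (List.replicate s n ++ (n :: b)) = cntD (n :: b) := by
  induction s with
  | zero => simp
  | succ s ih =>
    rw [List.replicate_succ, List.cons_append,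
      cntD_cons n _ (by cases s <;> simp)]
    have hh : (List.replicate s n ++ n :: b).headI = n := by cases s <;> simp [List.replicate_succ]
    rw [hh, ih]; simp

lemma cntD_block (a b : List ℕ) (n r : ℕ) (hr : 1 ≤ r) :
    cntD (a ++ (List.replicate r n ++ b)) = cntD (a ++ [n]) + cntD (n :: b) := by
  obtain ⟨s, rfl⟩ : ∃ s, r = s + 1 := ⟨r - 1, by omega⟩
  rw [List.replicate_succ, List.cons_append, cntD_split]
  congr 1
  have : n :: (List.replicate s n ++ b) = List.replicate s n ++ (n :: b) := by
    rw [← List.cons_append, ← List.replicate_succ, List.replicate_succ', List.append_assoc]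
    simp
  rw [this, cntD_rep]

lemma descents_block (a b : List ℕ) (n r : ℕ) (hr : 1 ≤ r) :
    descents (a ++ (List.replicate r n ++ b)) = cntD (a ++ [n]) + cntD (n :: b) + 1 := by
  rw [descents_eq, cntD_block a b n r hr]


lemma isStirling_iff (w : List ℕ) :
    IsStirlingPerm w ↔ ∀ x y : ℕ, [x, y, x].Sublist w → x ≤ y := by
  constructor
  · intro h x y hs
    obtain ⟨is, his, hp⟩ := List.sublist_eq_map_getElem hs
    have hlen : is.length = 3 := by
      have := congrArg List.length his; simpa using this.symm
    match is, hlen with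
    | [i, s, j], _ =>
      simp only [List.map_cons, List.map_nil, List.cons.injEq, and_true,
        Fin.getElem_fin] at his
      obtain ⟨hx, hy, hx2⟩ := his
      simp only [List.pairwise_cons, List.mem_cons, List.mem_singleton,
        List.not_mem_nil] at hp
      have his2 : (i : ℕ) < (s : ℕ) := hp.1 s (Or.inl rfl)
      have hsj : (s : ℕ) < (j : ℕ) := hp.2.1 j (Or.inl rfl)
      have h1 : w.getD (i : ℕ) 0 = w[(i : ℕ)] := List.getD_eq_getElem w 0 i.isLt
      have h2 : w.getD (s : ℕ) 0 = w[(s : ℕ)] := List.getD_eq_getElem w 0 s.isLt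
      have h3 : w.getD (j : ℕ) 0 = w[(j : ℕ)] := List.getD_eq_getElem w 0 j.isLt
      have := h i s j his2 hsj j.isLt (by rw [h1, h3, ← hx, ← hx2])
      rw [h1, h2, ← hx, ← hy] at this
      exact this
  · intro h i s j h1 h2 h3 heq
    have hi : i < w.length := by omega
    have hs : s < w.length := by omega
    have hsub : [w[i], w[s], w[j]].Sublist w := by
      have := List.map_getElem_sublist (l := w)
        (is := [⟨i, hi⟩, ⟨s, hs⟩, ⟨j, h3⟩]) (by simp [h1, h2]; omega)
      simpa using this
    have hij : w[i] = w[j] := by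
      rw [← List.getD_eq_getElem w 0 hi, ← List.getD_eq_getElem w 0 h3]; exact heq
    rw [List.getD_eq_getElem w 0 hi, List.getD_eq_getElem w 0 hs]
    exact h w[i] w[s] (by rw [hij] at hsub ⊢; exact hsub)

lemma stirling_block (a b : List ℕ) (n r r' : ℕ) (ha : n ∉ a) (hb : n ∉ b)
    (hr : 1 ≤ r) (hr' : 1 ≤ r')
    (h : IsStirlingPerm (a ++ (List.replicate r n ++ b))) :
    IsStirlingPerm (a ++ (List.replicate r' n ++ b)) := by
  rw [isStirling_iff] at h ⊢
  intro x y hs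
  have emb : ∀ {p1 p2 p3 : List ℕ}, p1.Sublist a → p2.Sublist (List.replicate r n) →
      p3.Sublist b → p1 ++ (p2 ++ p3) = [x, y, x] → x ≤ y := by
    intro p1 p2 p3 h1 h2 h3 he
    exact h x y (he ▸ (h1.append (h2.append h3)))
  have hn1 : [n].Sublist (List.replicate r n) := by
    have : [n] = List.replicate 1 n := rfl
    rw [this, List.replicate_sublist_replicate]; exact hr
  obtain ⟨s1, t, heq, hs1, ht⟩ := List.sublist_append_iff.mp hs
  obtain ⟨s2, s3, heq2, hs2, hs3⟩ := List.sublist_append_iff.mp ht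
  subst heq2
  obtain ⟨m, hm, rfl⟩ := List.sublist_replicate_iff.mp hs2
  match m, heq with
  | 0, heq =>
    refine emb hs1 (List.nil_sublist _) hs3 ?_
    simp only [List.nil_append]
    simp only [List.replicate, List.nil_append] at heq
    exact heq.symm
  | 1, heq =>
    simp only [List.replicate_succ, List.replicate_zero] at heq
    match s1, hs1, heq with
    | [], hs1, heq =>
      simp only [List.nil_append, List.cons_append, List.cons.injEq] at heq
      obtain ⟨hxn, heq3⟩ := heq
      exfalso; apply hb
      have : x ∈ s3 := by rw [← heq3]; simp
      rw [hxn] at this; exact hs3.subset this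
    | [u], hs1, heq =>
      simp only [List.cons_append, List.nil_append, List.cons.injEq] at heq
      obtain ⟨hu, hyn, heq3⟩ := heq
      refine emb hs1 hn1 (heq3 ▸ hs3) ?_
      rw [hu, hyn]; rfl
    | [u, v], hs1, heq =>
      simp only [List.cons_append, List.nil_append, List.cons.injEq] at heq
      obtain ⟨hu, hv, hn2, -⟩ := heq
      exfalso; apply ha
      have := hs1.subset (show u ∈ [u, v] by simp)
      rwa [← hu, hn2] at this
    | u :: v :: q :: s', hs1, heq =>
      exfalso
      have hl := congrArg List.length heq
      simp only [List.length_cons, List.length_append, List.length_replicate,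
        List.length_nil] at hl
      omega
  | 2, heq =>
    simp only [List.replicate_succ, List.replicate_zero] at heq
    match s1, hs1, heq with
    | [], hs1, heq =>
      simp only [List.nil_append, List.cons_append, List.cons.injEq] at heq
      obtain ⟨hxn, hyn, -⟩ := heq
      rw [hxn, hyn]
    | [u], hs1, heq =>
      simp only [List.cons_append, List.nil_append, List.cons.injEq] at heq
      obtain ⟨hu, hyn, hxn, -⟩ := heq
      exfalso; apply ha
      have := hs1.subset (show u ∈ [u] by simp)
      rw [← hu] at this; rw [hxn] at this; exact this
    | u :: v :: s', hs1, heq =>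
      exfalso
      have hl := congrArg List.length heq
      simp only [List.length_cons, List.length_append, List.length_replicate,
        List.length_nil] at hl
      omega
  | (m + 3), heq =>
    have hl := congrArg List.length heq
    simp only [List.length_cons, List.length_append, List.length_replicate,
      List.length_nil] at hl
    have hs10 : s1 = [] := List.length_eq_zero_iff.mp (by omega)
    have hs30 : s3 = [] := List.length_eq_zero_iff.mp (by omega)
    have hm0 : m = 0 := by omega
    subst hs10 hs30 hm0
    simp only [List.nil_append, List.append_nil] at heq
    have h3 : List.replicate 3 n = [n, n, n] := rfl
    rw [h3] at heq
    have hx : x = n := by injection heq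
    have hy : y = n := by
      have := heq; injection this with _ h2; injection h2
    rw [hx, hy]


/-! ### takeWhile/dropWhile over appends -/

lemma takeWhile_append_all (p : ℕ → Bool) (a l : List ℕ) (h : ∀ x ∈ a, p x) :
    (a ++ l).takeWhile p = a ++ l.takeWhile p := by
  induction a with
  | nil => simp
  | cons y a' ih =>
    rw [List.cons_append, List.takeWhile_cons_of_pos (h y (by simp)), List.cons_append,
      ih fun x hx => h x (by simp [hx])]

lemma dropWhile_append_all (p : ℕ → Bool) (a l : List ℕ) (h : ∀ x ∈ a, p x) :
    (a ++ l).dropWhile p = l.dropWhile p := by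
  induction a with
  | nil => simp
  | cons y a' ih =>
    rw [List.cons_append, List.dropWhile_cons_of_pos (h y (by simp)),
      ih fun x hx => h x (by simp [hx])]

/-! ### swapBlock -/

def swapBlock (n r' : ℕ) (w : List ℕ) : List ℕ :=
  w.takeWhile (· ≠ n) ++ (List.replicate r' n ++ (w.dropWhile (· ≠ n)).dropWhile (· = n))

lemma swapBlock_eq (a b : List ℕ) (n s : ℕ) (ha : n ∉ a) (hb : n ∉ b) (hs : 1 ≤ s)
    (r' : ℕ) :
    swapBlock n r' (a ++ (List.replicate s n ++ b)) = a ++ (List.replicate r' n ++ b) := by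
  obtain ⟨s', rfl⟩ : ∃ s', s = s' + 1 := ⟨s - 1, by omega⟩
  have hpa : ∀ x ∈ a, (fun y => decide (y ≠ n)) x = true := by
    intro x hx; simp; exact fun h => ha (h ▸ hx)
  have hT : (a ++ (List.replicate (s' + 1) n ++ b)).takeWhile (· ≠ n) = a := by
    rw [takeWhile_append_all _ _ _ hpa, List.replicate_succ, List.cons_append,
      List.takeWhile_cons_of_neg (by simp), List.append_nil]
  have hD : (a ++ (List.replicate (s' + 1) n ++ b)).dropWhile (· ≠ n)
      = List.replicate (s' + 1) n ++ b := by
    rw [dropWhile_append_all _ _ _ hpa, List.replicate_succ, List.cons_append,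
      List.dropWhile_cons_of_neg (by simp), ← List.cons_append, ← List.replicate_succ]
  have hD2 : (List.replicate (s' + 1) n ++ b).dropWhile (· = n) = b := by
    rw [dropWhile_append_all _ _ _ (by intro x hx; simp [List.eq_of_mem_replicate hx])]
    cases b with
    | nil => simp
    | cons x b' =>
      exact List.dropWhile_cons_of_neg (by simp; exact fun h => hb (by simp [h]))
  rw [swapBlock, hT, hD, hD2]

/-! ### Decomposition of a Stirling permutation -/

lemma dropWhile_head_false {p : ℕ → Bool} :
    ∀ (l : List ℕ) {x : ℕ} {t : List ℕ}, l.dropWhile p = x :: t → p x = false := by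
  intro l
  induction l with
  | nil => intro x t h; simp [List.dropWhile] at h
  | cons y l' ih =>
    intro x t h
    by_cases hp : p y
    · rw [List.dropWhile_cons_of_pos hp] at h; exact ih h
    · rw [List.dropWhile_cons_of_neg hp] at h
      injection h with h1 _
      rw [← h1]
      exact Bool.eq_false_iff.mpr hp

lemma decomp (M₀ : Multiset ℕ) (n r : ℕ) (hM : ∀ x ∈ M₀, x < n) (hr : 1 ≤ r)
    (w : List ℕ) (hw : (↑w : Multiset ℕ) = M₀ + Multiset.replicate r n)
    (hst : IsStirlingPerm w) :
    ∃ a b, w = a ++ (List.replicate r n ++ b) ∧ n ∉ a ∧ n ∉ b := by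
  have hnM : n ∉ M₀ := fun h => lt_irrefl n (hM n h)
  have hnw : n ∈ w := by
    rw [← Multiset.mem_coe, hw]
    exact Multiset.mem_add.mpr (Or.inr (Multiset.mem_replicate.mpr ⟨by omega, rfl⟩))
  set a := w.takeWhile (· ≠ n) with hadef
  set t := w.dropWhile (· ≠ n) with htdef
  have hat : a ++ t = w := List.takeWhile_append_dropWhile
  have hna : n ∉ a := by
    intro h
    have := List.mem_takeWhile_imp h
    simp at this
  have hnt : n ∈ t := by
    rcases List.mem_append.mp (by rw [hat]; exact hnw) with h | h
    · exact absurd h hna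
    · exact h
  have htne : t ≠ [] := List.ne_nil_of_mem hnt
  obtain ⟨x1, t', ht_eq⟩ := List.exists_cons_of_ne_nil htne
  have hx1 : x1 = n := by
    have := dropWhile_head_false w (htdef ▸ ht_eq)
    simpa using this
  rw [hx1] at ht_eq
  set c := t.takeWhile (· = n) with hcdef
  set B := t.dropWhile (· = n) with hBdef
  have hcB : c ++ B = t := List.takeWhile_append_dropWhile
  have hc : c = List.replicate c.length n := by
    rw [List.eq_replicate_length]
    intro x hx
    have := List.mem_takeWhile_imp hx
    simpa using this
  have hc0 : c = n :: (t'.takeWhile (· = n)) := by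
    rw [hcdef]
    rw [ht_eq, List.takeWhile_cons_of_pos (by simp)]
  have hnB : n ∉ B := by
    by_contra hnB
    have hBne : B ≠ [] := List.ne_nil_of_mem hnB
    obtain ⟨x0, B', hB_eq⟩ := List.exists_cons_of_ne_nil hBne
    have hx0 : ¬(x0 = n) := by
      have := dropWhile_head_false t (hBdef ▸ hB_eq)
      simpa using this
    have hnBt : n ∈ B' := by
      have h2 := hnB
      rw [hB_eq] at h2
      rcases List.mem_cons.mp h2 with h | h
      · exact absurd h.symm hx0
      · exact h
    have hx0w : x0 ∈ w := by
      rw [← hat, ← hcB]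
      exact List.mem_append.mpr (Or.inr (List.mem_append.mpr (Or.inr (by rw [hB_eq]; simp))))
    have hx0lt : x0 < n := by
      have hmem : x0 ∈ (↑w : Multiset ℕ) := Multiset.mem_coe.mpr hx0w
      rw [hw] at hmem
      rcases Multiset.mem_add.mp hmem with h | h
      · exact hM x0 h
      · exact absurd (Multiset.eq_of_mem_replicate h) hx0
    have hpat : [n, x0, n].Sublist w := by
      rw [← hat, ← hcB]
      have p1 : [n].Sublist c := by rw [hc0]; exact List.singleton_sublist.mpr (by simp)
      have p2 : [x0, n].Sublist B := by
        rw [hB_eq]; exact (List.singleton_sublist.mpr hnBt).cons₂ x0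
      have := (List.nil_sublist a).append (p1.append p2)
      simpa using this
    have := (isStirling_iff w).mp hst n x0 hpat
    omega
  have hcount : c.length = r := by
    have h1 : Multiset.count n (↑w : Multiset ℕ) = r := by
      rw [hw, Multiset.count_add, Multiset.count_replicate,
        Multiset.count_eq_zero.mpr hnM]
      simp
    rw [Multiset.coe_count] at h1
    have h2 : List.count n w = c.length := by
      rw [← hat, ← hcB, List.count_append, List.count_append,
        List.count_eq_zero.mpr hna, List.count_eq_zero.mpr hnB]
      conv_lhs => rw [hc]
      simp
    omega
  refine ⟨a, B, ?_, hna, hnB⟩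
  rw [← hat, ← hcB]
  congr 1
  rw [← hcount]
  exact hc ▸ rfl



/-! ### swapBlock preserves everything -/

lemma swapBlock_spec (M₀ : Multiset ℕ) (n r r' i : ℕ) (hM : ∀ x ∈ M₀, x < n)
    (hr : 1 ≤ r) (hr' : 1 ≤ r') (w : List ℕ)
    (h : (↑w : Multiset ℕ) = M₀ + Multiset.replicate r n ∧ IsStirlingPerm w ∧
      descents w = i) :
    ((↑(swapBlock n r' w) : Multiset ℕ) = M₀ + Multiset.replicate r' n ∧
      IsStirlingPerm (swapBlock n r' w) ∧ descents (swapBlock n r' w) = i) ∧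
      swapBlock n r (swapBlock n r' w) = w := by
  obtain ⟨h1, h2, h3⟩ := h
  obtain ⟨a, b, rfl, ha, hb⟩ := decomp M₀ n r hM hr w h1 h2
  rw [swapBlock_eq a b n r ha hb hr r']
  have hab : (↑a : Multiset ℕ) + ↑b = M₀ := by
    rw [← Multiset.coe_add, ← Multiset.coe_add, Multiset.coe_replicate] at h1
    have h1' := h1
    rw [add_comm (Multiset.replicate r n) (↑b : Multiset ℕ), ← add_assoc] at h1'
    exact add_right_cancel h1'
  refine ⟨⟨?_, ?_, ?_⟩, ?_⟩
  · rw [← Multiset.coe_add, ← Multiset.coe_add, Multiset.coe_replicate, ← hab,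
      add_comm (Multiset.replicate r' n) (↑b : Multiset ℕ), ← add_assoc]
  · exact stirling_block a b n r r' ha hb hr hr' h2
  · rw [descents_block a b n r' hr', ← descents_block a b n r hr]; exact h3
  · exact swapBlock_eq a b n r' ha hb hr' r

lemma card_swap (M₀ : Multiset ℕ) (n : ℕ) (hM : ∀ x ∈ M₀, x < n) (r r' i : ℕ)
    (hr : 1 ≤ r) (hr' : 1 ≤ r') :
    Nat.card {w : List ℕ // (↑w : Multiset ℕ) = M₀ + Multiset.replicate r n ∧
        IsStirlingPerm w ∧ descents w = i}
      = Nat.card {w : List ℕ // (↑w : Multiset ℕ) = M₀ + Multiset.replicate r' n ∧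
        IsStirlingPerm w ∧ descents w = i} := by
  apply Nat.card_congr
  refine ⟨fun x => ⟨swapBlock n r' x.1, (swapBlock_spec M₀ n r r' i hM hr hr' x.1 x.2).1⟩,
          fun y => ⟨swapBlock n r y.1, (swapBlock_spec M₀ n r' r i hM hr' hr y.1 y.2).1⟩,
          ?_, ?_⟩
  · intro x; apply Subtype.ext; exact (swapBlock_spec M₀ n r r' i hM hr hr' x.1 x.2).2
  · intro y; apply Subtype.ext; exact (swapBlock_spec M₀ n r' r i hM hr' hr y.1 y.2).2

lemma multisetOf_split (k : ℕ → ℕ) (n : ℕ) (hn : 1 ≤ n) :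
    multisetOf k n = multisetOf k (n - 1) + Multiset.replicate (k (n - 1)) n := by
  obtain ⟨m, rfl⟩ : ∃ m, n = m + 1 := ⟨n - 1, by omega⟩
  simp only [multisetOf, Nat.add_sub_cancel]
  rw [Finset.sum_range_succ]

lemma eulerian_eq (k : ℕ → ℕ) (n i : ℕ) (hn : 1 ≤ n) (hlast : 2 ≤ k (n - 1)) :
    eulerianA (Function.update k (n - 1) (k (n - 1) - 1)) n i = eulerianA k n i := by
  set k' := Function.update k (n - 1) (k (n - 1) - 1) with hk'
  have e0 : multisetOf k' (n - 1) = multisetOf k (n - 1) := by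
    unfold multisetOf
    refine Finset.sum_congr rfl fun j hj => ?_
    have hj' : j ≠ n - 1 := by have := Finset.mem_range.mp hj; omega
    rw [hk', Function.update_of_ne hj']
  have e1 : multisetOf k n = multisetOf k (n - 1) + Multiset.replicate (k (n - 1)) n :=
    multisetOf_split k n hn
  have e2 : multisetOf k' n = multisetOf k (n - 1) + Multiset.replicate (k (n - 1) - 1) n := by
    rw [multisetOf_split k' n hn, e0, hk', Function.update_self]
  have hM : ∀ x ∈ multisetOf k (n - 1), x < n := by
    intro x hx
    obtain ⟨j, hj, hxj⟩ := Multiset.mem_sum.mp hx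
    have := Multiset.eq_of_mem_replicate hxj
    have := Finset.mem_range.mp hj
    omega
  unfold eulerianA
  rw [e1, e2]
  exact card_swap _ n hM (k (n - 1) - 1) (k (n - 1)) i (by omega) (by omega)

/-- If k_n > 1, then B_k(m) = B_k(m-1) + B_{k'}(m) where k' decrements the last entry. -/
theorem Bpoly_last_gt_one (k : ℕ → ℕ) (n m : ℕ) (hk : ∀ i < n, 1 ≤ k i)
    (hn : 1 ≤ n) (hm : 1 ≤ m) (hlast : 2 ≤ k (n - 1)) :
    Bpoly k n m =
      Bpoly k n (m - 1) + Bpoly (Function.update k (n - 1) (k (n - 1) - 1)) n m := by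
  set k' := Function.update k (n - 1) (k (n - 1) - 1) with hk'
  have hKn : n ≤ bigK k n := by
    unfold bigK
    calc n = ∑ _i ∈ Finset.range n, 1 := by simp
    _ ≤ ∑ i ∈ Finset.range n, k i :=
      Finset.sum_le_sum fun i hi => hk i (Finset.mem_range.mp hi)
  have hK' : bigK k' n = bigK k n - 1 := by
    unfold bigK
    rw [hk', Finset.sum_update_of_mem (Finset.mem_range.mpr (by omega))]
    rw [Finset.sum_eq_sum_sdiff_singleton_add (Finset.mem_range.mpr (show n - 1 < n by omega)) k]
    omega
  have hA : ∀ i, eulerianA k' n i = eulerianA k n i := fun i =>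
    eulerian_eq k n i hn hlast
  unfold Bpoly
  rw [hK', ← Finset.sum_add_distrib]
  refine Finset.sum_congr rfl fun i hi => ?_
  obtain ⟨hi1, hin⟩ := Finset.mem_Icc.mp hi
  rw [hA i, ← Nat.left_distrib]
  congr 1
  obtain ⟨K', hKeq⟩ : ∃ K', bigK k n = K' + 1 := ⟨bigK k n - 1, by omega⟩
  have h1 : bigK k n + m - i = (bigK k n + (m - 1) - i) + 1 := by omega
  have h2 : bigK k n - 1 + m - i = bigK k n + (m - 1) - i := by omega
  rw [h1, h2, hKeq]
  simp only [Nat.add_sub_cancel]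
  rw [Nat.choose_succ_succ]
  exact Nat.add_comm _ _
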